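/- Let S be a closed symmetric operator in a complex Hilbert space H with non-dense domain, set H₀ := closure(dom S) and S₀ := P_{H₀}S (domain dom S), and assume S is regular, i.e. S₀ is a closed operator in H₀. Let S̃ be a selfadjoint extension of S which is regular, meaning that the operator P_{H₀}S̃ with domain dom S̃ has closed graph. Then the compression S̃₀ of S̃ to H₀ (dom S̃₀ = dom S̃ ∩ H₀, S̃₀x = P_{H₀}(S̃x)) is a selfadjoint extension of S₀ in the Hilbert space H₀; consequently the semi-deficiency subspaces N'_i := N_i ∩ H₀ and N'_{−i} := N_{−i} ∩ H₀ have equal Hilbert dimension. -/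

import Mathlib

set_option synthInstance.maxHeartbeats 1000000

open scoped ComplexInnerProductSpace

variable {H : Type*} [NormedAddCommGroup H] [InnerProductSpace ℂ H] [CompleteSpace H]

section Auxiliary

set_option linter.unusedSectionVars false
set_option maxHeartbeats 1000000

open LinearPMap

section GeneralAdjoint

variable {E F : Type*} [NormedAddCommGroup E] [InnerProductSpace ℂ E] [CompleteSpace E]
  [NormedAddCommGroup F] [InnerProductSpace ℂ F] [CompleteSpace F]

theorem myadj_graph_mem_iff (T : E →ₗ.[ℂ] F) (hT : Dense (T.domain : Set E)) (y : F) (w : E) :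
    (y, w) ∈ T†.graph ↔ ∀ x : T.domain, ⟪w, (x:E)⟫ = ⟪y, T x⟫ := by
  constructor
  · rintro h
    rw [LinearPMap.mem_graph_iff] at h
    obtain ⟨z, hz1, hz2⟩ := h
    intro x
    have := T.adjoint_isFormalAdjoint hT z x
    simp only [hz2] at this
    rw [this]
    simp [hz1]
  · intro h
    have hy : y ∈ T†.domain := T.mem_adjoint_domain_of_exists y ⟨w, h⟩
    have : T† ⟨y, hy⟩ = w := LinearPMap.adjoint_apply_eq hT ⟨y, hy⟩ h
    rw [LinearPMap.mem_graph_iff]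
    exact ⟨⟨y, hy⟩, rfl, this⟩

set_option linter.unusedSectionVars false

/-- The graph of the adjoint is closed. -/
theorem myadj_isClosed (T : E →ₗ.[ℂ] F) (hT : Dense (T.domain : Set E)) :
    T†.IsClosed := by
  have key : (T†.graph : Set (F × E)) =
      (WithLp.prodContinuousLinearEquiv 2 ℂ F E).symm ⁻¹'
        ((LinearMap.range
          (((WithLp.linearEquiv 2 ℂ (F × E)).symm : (F × E) →ₗ[ℂ] WithLp 2 (F × E)).comp
            (T.toFun.prod (-T.domain.subtype))))ᗮ : Set (WithLp 2 (F × E))) := by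
    ext ⟨y, w⟩
    simp only [Set.mem_preimage, SetLike.mem_coe, Submodule.mem_orthogonal,
      LinearMap.mem_range, forall_exists_index, forall_apply_eq_imp_iff]
    rw [myadj_graph_mem_iff T hT]
    constructor
    · intro h x
      have hx := h x
      show (⟪T x, y⟫ + ⟪-(x:E), w⟫ : ℂ) = 0
      rw [inner_neg_left]
      have h2 : (⟪(x:E), w⟫ : ℂ) = ⟪T x, y⟫ := by
        have := congrArg (starRingEnd ℂ) hx
        simpa using this
      rw [← h2]; ring
    · intro h x
      have hx : (⟪T x, y⟫ + ⟪-(x:E), w⟫ : ℂ) = 0 := h x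
      rw [inner_neg_left] at hx
      have h2 : (⟪(x:E), w⟫ : ℂ) = ⟪T x, y⟫ := by linear_combination -hx
      have := congrArg (starRingEnd ℂ) h2
      simpa using this
  rw [LinearPMap.IsClosed, key]
  exact (Submodule.isClosed_orthogonal _).preimage (ContinuousLinearEquiv.continuous _)

/-- For a closed densely defined operator with densely defined adjoint, the double adjoint
equals the operator itself. -/
theorem myadj_adjoint_adjoint (T : E →ₗ.[ℂ] F) (hT : Dense (T.domain : Set E))
    (hT' : Dense (T†.domain : Set F)) (hc : T.IsClosed) : T†.adjoint = T := by
  have hle : T ≤ T†.adjoint := (T.adjoint_isFormalAdjoint hT).le_adjoint hT'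
  refine le_antisymm (LinearPMap.le_of_le_graph ?_) hle
  intro zz hmem
  obtain ⟨y, w⟩ := zz
  have hchar : ∀ x : T†.domain, ⟪w, (x:F)⟫ = ⟪y, T† x⟫ :=
    (myadj_graph_mem_iff T† hT' y w).mp hmem
  -- the graph of T as a closed submodule of `WithLp 2 (E × F)`
  set e : WithLp 2 (E × F) ≃L[ℂ] E × F := WithLp.prodContinuousLinearEquiv 2 ℂ E F with he
  set GW : Submodule ℂ (WithLp 2 (E × F)) :=
    T.graph.map ((WithLp.linearEquiv 2 ℂ (E × F)).symm : (E × F) →ₗ[ℂ] WithLp 2 (E × F)) with hGW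
  have hGWclosed : IsClosed (GW : Set (WithLp 2 (E × F))) := by
    have : (GW : Set (WithLp 2 (E × F))) = e.symm '' (T.graph : Set (E × F)) := by
      simp [hGW, Submodule.map_coe]
      rfl
    rw [this]
    exact (e.symm.toHomeomorph.isClosed_image).2 hc
  have hGWc : GWᗮᗮ = GW := by
    rw [Submodule.orthogonal_orthogonal_eq_closure,
      IsClosed.submodule_topologicalClosure_eq hGWclosed]
  set z : WithLp 2 (E × F) := (WithLp.linearEquiv 2 ℂ (E × F)).symm (y, w) with hz
  have hzmem : z ∈ GWᗮᗮ := by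
    rw [Submodule.mem_orthogonal]
    intro u hu
    rw [Submodule.mem_orthogonal] at hu
    -- u pairs to zero with every graph element
    have hu' : ∀ x : T.domain, (⟪(x:E), (e u).1⟫ + ⟪T x, (e u).2⟫ : ℂ) = 0 := by
      intro x
      have := hu ((WithLp.linearEquiv 2 ℂ (E × F)).symm ((x:E), T x))
        ⟨((x:E), T x), T.mem_graph x, rfl⟩
      simp [WithLp.prod_inner_apply] at this
      exact this
    set a := (e u).1
    set b := (e u).2
    have hb : ((b : F), -a) ∈ T†.graph := by
      rw [myadj_graph_mem_iff T hT]
      intro x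
      have := congrArg (starRingEnd ℂ) (hu' x)
      simp only [_root_.map_add, inner_conj_symm, _root_.map_zero] at this
      rw [inner_neg_left]
      linear_combination -this
    obtain ⟨xh, hx1, hx2⟩ := (LinearPMap.mem_graph_iff _).mp hb
    -- now compute the inner product
    have hw : (⟪w, b⟫ : ℂ) = -⟪y, a⟫ := by
      have := hchar xh
      rw [hx1, hx2] at this
      rw [this, inner_neg_right]
    show (⟪u, z⟫ : ℂ) = 0
    have : (⟪u, z⟫ : ℂ) = ⟪a, y⟫ + ⟪b, w⟫ := by
      simp [WithLp.prod_inner_apply, hz]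
      rfl
    rw [this]
    have h2 : (⟪b, w⟫ : ℂ) = -⟪a, y⟫ := by
      rw [← inner_conj_symm b w, hw]
      simp
    rw [h2]; ring
  rw [hGWc] at hzmem
  obtain ⟨g, hg, hgz⟩ := hzmem
  have : g = (y, w) := by
    have := congrArg (WithLp.linearEquiv 2 ℂ (E × F)) hgz
    simp at this
    exact this
  rwa [this] at hg


end GeneralAdjoint

section OneSpace

variable {K : Type*} [NormedAddCommGroup K] [InnerProductSpace ℂ K] [CompleteSpace K]

-- symmetric: the imaginary part bound
theorem my_im_bound (B : K →ₗ.[ℂ] K)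
    (hsymB : ∀ x y : B.domain, ⟪B x, (y:K)⟫ = ⟪(x:K), B y⟫) (μ : ℂ) (hμ : μ.im ≠ 0)
    (x : B.domain) : ‖(x:K)‖ ≤ |μ.im|⁻¹ * ‖B x + μ • (x:K)‖ := by
  have hreal : (⟪(x:K), B x⟫ : ℂ).im = 0 := by
    rw [← Complex.conj_eq_iff_im]
    rw [inner_conj_symm]
    exact hsymB x x
  have hz : (⟪(x:K), B x + μ • (x:K)⟫ : ℂ).im = μ.im * ‖(x:K)‖^2 := by
    rw [inner_add_right, inner_smul_right, inner_self_eq_norm_sq_to_K]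
    simp [hreal, ← Complex.ofReal_pow]
  have h1 : |μ.im| * ‖(x:K)‖^2 ≤ ‖(x:K)‖ * ‖B x + μ • (x:K)‖ := by
    calc |μ.im| * ‖(x:K)‖^2 = |(⟪(x:K), B x + μ • (x:K)⟫ : ℂ).im| := by
          rw [hz, abs_mul, abs_of_nonneg (by positivity : (0:ℝ) ≤ ‖(x:K)‖^2)]
      _ ≤ ‖(⟪(x:K), B x + μ • (x:K)⟫ : ℂ)‖ := by
          exact Complex.abs_im_le_norm _
      _ ≤ ‖(x:K)‖ * ‖B x + μ • (x:K)‖ := norm_inner_le_norm _ _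
  rcases eq_or_lt_of_le (norm_nonneg (x:K)) with h0 | h0
  · rw [← h0]; positivity
  · rw [inv_mul_eq_div, le_div_iff₀ (abs_pos.mpr hμ)]
    nlinarith [h1, h0]

/-- For selfadjoint `B` and nonreal `-μ`, the map `x ↦ B x + μ x` is surjective. -/
theorem my_selfAdjoint_surj (B : K →ₗ.[ℂ] K) (hd : Dense (B.domain : Set K))
    (hsa : B.adjoint = B) (μ : ℂ) (hμ : μ.im ≠ 0) (y : K) :
    ∃ x : B.domain, B x + μ • (x:K) = y := by
  have hsymB : ∀ x y : B.domain, ⟪B x, (y:K)⟫ = ⟪(x:K), B y⟫ := by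
    have h := B.adjoint_isFormalAdjoint hd
    rw [hsa] at h
    exact h
  have hclB : B.IsClosed := by
    have := myadj_isClosed B hd
    rwa [hsa] at this
  set L : B.domain →ₗ[ℂ] K := B.toFun + μ • B.domain.subtype with hL
  have hLval : ∀ x : B.domain, L x = B x + μ • (x:K) := fun x => rfl
  -- range L is closed
  set e : WithLp 2 (K × K) ≃L[ℂ] K × K := WithLp.prodContinuousLinearEquiv 2 ℂ K K with he
  set G : Submodule ℂ (WithLp 2 (K × K)) :=
    B.graph.map ((WithLp.linearEquiv 2 ℂ (K × K)).symm : (K × K) →ₗ[ℂ] WithLp 2 (K × K)) with hG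
  have hGclosed : IsClosed (G : Set (WithLp 2 (K × K))) := by
    have : (G : Set (WithLp 2 (K × K))) = e.symm '' (B.graph : Set (K × K)) := by
      simp [hG, Submodule.map_coe]; rfl
    rw [this]
    exact (e.symm.toHomeomorph.isClosed_image).2 hclB
  haveI : CompleteSpace G := hGclosed.completeSpace_coe
  set f : WithLp 2 (K × K) →L[ℂ] K :=
    ((ContinuousLinearMap.snd ℂ K K) + μ • (ContinuousLinearMap.fst ℂ K K)).comp
      (e : WithLp 2 (K × K) →L[ℂ] K × K) with hf
  set Φ : G →L[ℂ] K := f.comp (Submodule.subtypeL G) with hΦ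
  have hΦval : ∀ g : G, Φ g = (e (g:WithLp 2 (K × K))).2 + μ • (e (g:WithLp 2 (K × K))).1 := by
    intro g; rfl
  -- each g ∈ G comes from the graph
  have hGmem : ∀ g : G, ∃ x : B.domain, (e (g:WithLp 2 (K × K))).1 = (x:K) ∧
      (e (g:WithLp 2 (K × K))).2 = B x := by
    rintro ⟨g, hg⟩
    obtain ⟨p, hp, hpe⟩ := hg
    obtain ⟨x, hx1, hx2⟩ := (LinearPMap.mem_graph_iff _).mp hp
    refine ⟨x, ?_, ?_⟩ <;> subst hpe <;> simp [he] <;> [exact hx1.symm; exact hx2.symm]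
  have hΦrange : Set.range Φ = Set.range (fun x : B.domain => B x + μ • (x:K)) := by
    ext v
    constructor
    · rintro ⟨g, rfl⟩
      obtain ⟨x, h1, h2⟩ := hGmem g
      exact ⟨x, by rw [hΦval g, h1, h2]⟩
    · rintro ⟨x, rfl⟩
      refine ⟨⟨(WithLp.linearEquiv 2 ℂ (K × K)).symm ((x:K), B x),
        ⟨((x:K), B x), B.mem_graph x, rfl⟩⟩, ?_⟩
      rw [hΦval]
      simp [he]
  -- antilipschitz bound
  set c : ℝ := |μ.im|⁻¹ with hc
  have hc0 : 0 ≤ c := by positivity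
  have hbd : ∀ g : G, ‖g‖ ≤ (c + (1 + ‖μ‖ * c)) * ‖Φ g‖ := by
    intro g
    obtain ⟨x, h1, h2⟩ := hGmem g
    have hΦg : Φ g = B x + μ • (x:K) := by rw [hΦval g, h1, h2]
    have hx : ‖(x:K)‖ ≤ c * ‖Φ g‖ := by rw [hΦg]; exact my_im_bound B hsymB μ hμ x
    have hBx : ‖B x‖ ≤ (1 + ‖μ‖ * c) * ‖Φ g‖ := by
      have : B x = Φ g - μ • (x:K) := by rw [hΦg]; abel
      rw [this]
      calc ‖Φ g - μ • (x:K)‖ ≤ ‖Φ g‖ + ‖μ • (x:K)‖ := norm_sub_le _ _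
        _ = ‖Φ g‖ + ‖μ‖ * ‖(x:K)‖ := by rw [norm_smul]
        _ ≤ ‖Φ g‖ + ‖μ‖ * (c * ‖Φ g‖) := by
            have := mul_le_mul_of_nonneg_left hx (norm_nonneg μ)
            linarith
        _ = (1 + ‖μ‖ * c) * ‖Φ g‖ := by ring
    have hnorm : ‖g‖^2 = ‖(e (g:WithLp 2 (K × K))).1‖^2 + ‖(e (g:WithLp 2 (K × K))).2‖^2 :=
      WithLp.prod_norm_sq_eq_of_L2 (g : WithLp 2 (K × K))
    have hsq : ‖g‖^2 ≤ ((c + (1 + ‖μ‖ * c)) * ‖Φ g‖)^2 := by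
      rw [hnorm, h1, h2]
      nlinarith [hx, hBx, norm_nonneg (Φ g), norm_nonneg (B x : K), norm_nonneg (x:K),
        norm_nonneg μ, hc0]
    calc ‖g‖ = Real.sqrt (‖g‖^2) := (Real.sqrt_sq (norm_nonneg g)).symm
      _ ≤ Real.sqrt (((c + (1 + ‖μ‖ * c)) * ‖Φ g‖)^2) := Real.sqrt_le_sqrt hsq
      _ = (c + (1 + ‖μ‖ * c)) * ‖Φ g‖ := Real.sqrt_sq (by positivity)
  -- closed range
  have hrangeclosed : IsClosed (Set.range (fun x : B.domain => B x + μ • (x:K))) := by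
    rw [← hΦrange]
    set C : NNReal := Real.toNNReal (c + (1 + ‖μ‖ * c)) with hC
    have hbd' : ∀ g : G, ‖g‖ ≤ (C:ℝ) * ‖Φ g‖ := by
      intro g
      rw [hC, Real.coe_toNNReal _ (by positivity)]
      exact hbd g
    exact (Φ.antilipschitz_of_bound hbd').isClosed_range Φ.uniformContinuous
  -- dense range
  have horth : (LinearMap.range L)ᗮ = ⊥ := by
    rw [Submodule.eq_bot_iff]
    intro v hv
    rw [Submodule.mem_orthogonal] at hv
    have hv' : ∀ x : B.domain, (⟪B x, v⟫ + (starRingEnd ℂ μ) * ⟪(x:K), v⟫ : ℂ) = 0 := by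
      intro x
      have := hv (L x) (LinearMap.mem_range_self L x)
      rw [hLval] at this
      rwa [inner_add_left, inner_smul_left] at this
    have hmem2 : (v, -(starRingEnd ℂ μ) • v) ∈ B†.graph := by
      rw [myadj_graph_mem_iff B hd]
      intro x
      rw [inner_smul_left]
      have hconj := congrArg (starRingEnd ℂ) (hv' x)
      simp only [_root_.map_add, _root_.map_mul, inner_conj_symm, _root_.map_zero,
        RingHomCompTriple.comp_apply, RingHom.id_apply, starRingEnd_self_apply] at hconj
      -- hconj : ⟪v, B x⟫ + μ * ⟪v, x⟫ = 0
      rw [_root_.map_neg, starRingEnd_self_apply]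
      linear_combination -hconj
    rw [hsa] at hmem2
    obtain ⟨xh, hx1, hx2⟩ := (LinearPMap.mem_graph_iff _).mp hmem2
    have hreal : (⟪(xh:K), B xh⟫ : ℂ).im = 0 := by
      rw [← Complex.conj_eq_iff_im, inner_conj_symm]
      exact hsymB xh xh
    rw [hx1, hx2] at hreal
    simp only at hreal
    rw [inner_smul_right, inner_self_eq_norm_sq_to_K] at hreal
    have : μ.im * ‖v‖^2 = 0 := by
      rw [← hreal]
      simp [← Complex.ofReal_pow]
    have hv0 : ‖v‖ = 0 := by
      rcases mul_eq_zero.mp this with h | h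
      · exact absurd h hμ
      · exact pow_eq_zero_iff (by norm_num) |>.mp h
    have : v = 0 := norm_eq_zero.mp hv0
    simp [this]
  -- conclude surjectivity
  have hrange_closed' : IsClosed ((LinearMap.range L : Submodule ℂ K) : Set K) := by
    have : ((LinearMap.range L : Submodule ℂ K) : Set K) =
        Set.range (fun x : B.domain => B x + μ • (x:K)) := by
      rw [LinearMap.coe_range]; rfl
    rw [this]; exact hrangeclosed
  have htop : LinearMap.range L = ⊤ := by
    have h1 := Submodule.orthogonal_orthogonal_eq_closure (K := LinearMap.range L)
    rw [horth, Submodule.bot_orthogonal_eq_top,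
      IsClosed.submodule_topologicalClosure_eq hrange_closed'] at h1
    exact h1.symm
  have : y ∈ LinearMap.range L := htop ▸ Submodule.mem_top
  obtain ⟨x, hx⟩ := this
  exact ⟨x, hx⟩


/-- Unitary image of an orthogonal complement. -/
theorem my_map_orthogonal (U : K ≃ₗᵢ[ℂ] K) (p : Submodule ℂ K) (v : K) :
    v ∈ pᗮ ↔ U v ∈ (p.map (U.toLinearEquiv : K →ₗ[ℂ] K))ᗮ := by
  simp only [Submodule.mem_orthogonal]
  constructor
  · rintro h u ⟨w, hw, rfl⟩
    have : (⟪(U.toLinearEquiv : K →ₗ[ℂ] K) w, U v⟫ : ℂ) = ⟪w, v⟫ := U.inner_map_map w v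
    rw [this]
    exact h w hw
  · intro h w hw
    have : (⟪(U.toLinearEquiv : K →ₗ[ℂ] K) w, U v⟫ : ℂ) = ⟪w, v⟫ := U.inner_map_map w v
    rw [← this]
    exact h _ ⟨w, hw, rfl⟩

/-- Restriction of a unitary to a pair of corresponding submodules. -/
noncomputable def mySubIso (U : K ≃ₗᵢ[ℂ] K) (p q : Submodule ℂ K)
    (h : ∀ v : K, v ∈ p ↔ U v ∈ q) : ↥p ≃ₗᵢ[ℂ] ↥q where
  toFun x := ⟨U x, (h x).mp x.2⟩
  invFun y := ⟨U.symm y, (h _).mpr (by simpa using y.2)⟩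
  map_add' x y := by ext; simp
  map_smul' c x := by ext; simp
  left_inv x := by ext; simp
  right_inv y := by ext; simp
  norm_map' x := by simp [Submodule.coe_norm]

variable {H : Type*} [NormedAddCommGroup H] [InnerProductSpace ℂ H] [CompleteSpace H]

/-- Identification of `p ⊓ K` with a submodule of `↥K`. -/
noncomputable def myCompIso (p KS : Submodule ℂ H) (q : Submodule ℂ ↥KS)
    (h : ∀ v : ↥KS, v ∈ q ↔ (v:H) ∈ p) : ↥(p ⊓ KS) ≃ₗᵢ[ℂ] ↥q where
  toFun x := ⟨⟨(x:H), x.2.2⟩, (h _).mpr x.2.1⟩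
  invFun v := ⟨((v:↥KS):H), ⟨(h _).mp v.2, ((v:↥KS)).2⟩⟩
  map_add' x y := by ext; simp
  map_smul' c x := by ext; simp
  left_inv x := by ext; simp
  right_inv v := by ext; simp
  norm_map' x := by simp [Submodule.coe_norm]

/-- The elements of `p` are dense in the closure of `p`. -/
theorem my_dense_comap (p : Submodule ℂ H) :
    Dense ((p.comap p.topologicalClosure.subtype : Submodule ℂ ↥p.topologicalClosure) :
      Set ↥p.topologicalClosure) := by
  intro x
  rw [closure_subtype]
  have himg : ((↑) '' ((p.comap p.topologicalClosure.subtype :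
      Submodule ℂ ↥p.topologicalClosure) : Set ↥p.topologicalClosure) : Set H) = (p : Set H) := by
    ext v
    constructor
    · rintro ⟨w, hw, rfl⟩; exact hw
    · intro hv
      exact ⟨⟨v, p.le_topologicalClosure hv⟩, hv, rfl⟩
  rw [himg]
  have hx : (x:H) ∈ (p.topologicalClosure : Set H) := x.2
  rwa [Submodule.topologicalClosure_coe] at hx

theorem my_norm_eq (B : K →ₗ.[ℂ] K)
    (hsymB : ∀ x y : B.domain, ⟪B x, (y:K)⟫ = ⟪(x:K), B y⟫) (x : B.domain) :
    ‖B x + (-Complex.I) • (x:K)‖ = ‖B x + Complex.I • (x:K)‖ := by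
  have hreal : (⟪B x, (x:K)⟫ : ℂ).im = 0 := by
    rw [← Complex.conj_eq_iff_im, inner_conj_symm]
    exact (hsymB x x).symm
  have key : ∀ μ : ℂ, μ.re = 0 →
      ‖B x + μ • (x:K)‖^2 = ‖B x‖^2 + ‖μ‖^2 * ‖(x:K)‖^2 := by
    intro μ hμ
    rw [@norm_add_sq ℂ]
    have h2 : (⟪B x, μ • (x:K)⟫ : ℂ) = μ * ⟪B x, (x:K)⟫ := inner_smul_right _ _ _
    have h3 : Complex.re (⟪B x, μ • (x:K)⟫ : ℂ) = 0 := by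
      rw [h2, Complex.mul_re, hμ, hreal]
      ring
    rw [norm_smul]
    simp only [RCLike.re_to_complex] at h3 ⊢
    rw [h3]
    ring
  have h1 := key (-Complex.I) (by simp)
  have h2 := key Complex.I (by simp)
  have : ‖B x + (-Complex.I) • (x:K)‖^2 = ‖B x + Complex.I • (x:K)‖^2 := by
    rw [h1, h2]; simp
  have := congrArg Real.sqrt this
  rwa [Real.sqrt_sq (norm_nonneg _), Real.sqrt_sq (norm_nonneg _)] at this


end OneSpace

end Auxiliary

set_option maxHeartbeats 2000000

/-- The compression of an operator `T` in `H` to a closed subspace `K`: the operator in the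
Hilbert space `K` with domain `dom T ∩ K` acting as `x ↦ P_K (T x)`. -/
noncomputable def compression (K : Submodule ℂ H) [CompleteSpace K] (T : H →ₗ.[ℂ] H) :
    (↥K) →ₗ.[ℂ] (↥K) where
  domain := T.domain.comap K.subtype
  toFun := (K.orthogonalProjectionOnto).toLinearMap ∘ₗ T.toFun ∘ₗ
    ((K.subtype.domRestrict (T.domain.comap K.subtype)).codRestrict T.domain fun x => x.2)

/-- The operator `P_K T` with domain `dom T`, mapping `H` into the closed subspace `K`. -/
noncomputable def projComp (K : Submodule ℂ H) [CompleteSpace K] (T : H →ₗ.[ℂ] H) :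
    H →ₗ.[ℂ] (↥K) where
  domain := T.domain
  toFun := (K.orthogonalProjectionOnto).toLinearMap ∘ₗ T.toFun

/-- The deficiency subspace `N_λ = (ran (S - conj λ • I))ᗮ` of an operator `S`
(so that `defSubspace S λ = (ran (S - λ̄ I))ᗮ`). -/
noncomputable abbrev defSubspace (S : H →ₗ.[ℂ] H) (lam : ℂ) : Submodule ℂ H :=
  (LinearMap.range (S.toFun - (starRingEnd ℂ lam) • S.domain.subtype))ᗮ

/-- Let `S` be a regular non-densely defined closed symmetric operator and let
`S̃` be a regular selfadjoint extension of `S` (i.e. `P_{H₀}S̃` with domain `dom S̃` has closed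
graph, where `H₀ = closure (dom S)`).  Then the compression of `S̃` to `H₀` is a selfadjoint
extension of `S₀ = P_{H₀}S` in `H₀`; consequently the semi-deficiency subspaces
`N'_i = N_i ∩ H₀` and `N'_{-i} = N_{-i} ∩ H₀` have equal Hilbert dimension. -/
theorem isSelfAdjoint_compression_of_regular_extension
    (S : H →ₗ.[ℂ] H)
    (hsym : ∀ x y : S.domain, ⟪S x, (y : H)⟫ = ⟪(x : H), S y⟫)
    (hclosed : S.IsClosed)
    (hnd : ¬ Dense (S.domain : Set H))
    (hreg : (compression S.domain.topologicalClosure S).IsClosed)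
    (St : H →ₗ.[ℂ] H) (hext : S ≤ St) (hsa : IsSelfAdjoint St)
    (hregext : (projComp S.domain.topologicalClosure St).IsClosed) :
    IsSelfAdjoint (compression S.domain.topologicalClosure St) ∧
    compression S.domain.topologicalClosure S ≤ compression S.domain.topologicalClosure St ∧
    Nonempty
      (↥(defSubspace S Complex.I ⊓ S.domain.topologicalClosure) ≃ₗᵢ[ℂ]
        ↥(defSubspace S (-Complex.I) ⊓ S.domain.topologicalClosure)) := by
  classical
  set Kc : Submodule ℂ H := S.domain.topologicalClosure with hKc
  set A : H →ₗ.[ℂ] ↥Kc := projComp Kc St with hA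
  set C : (↥Kc) →ₗ.[ℂ] (↥Kc) := compression Kc St with hCdef
  have hsa' : St.adjoint = St := hsa
  have hdSt : Dense (St.domain : Set H) := hsa.dense_domain
  have hsymSt : ∀ x y : St.domain, ⟪St x, (y:H)⟫ = ⟪(x:H), St y⟫ := by
    have h := St.adjoint_isFormalAdjoint hdSt
    rw [hsa'] at h; exact h
  have hmemC : ∀ v : ↥Kc, (v ∈ C.domain ↔ (v:H) ∈ St.domain) := fun v => Iff.rfl
  have hCval : ∀ x : C.domain, C x = Kc.orthogonalProjectionOnto (St ⟨((x : ↥Kc) : H), x.2⟩) :=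
    fun x => rfl
  have hAval : ∀ x : A.domain, A x = Kc.orthogonalProjectionOnto (St x) := fun x => rfl
  -- density of the compressed domain
  have hdC : Dense ((C.domain : Submodule ℂ ↥Kc) : Set ↥Kc) := by
    apply (my_dense_comap S.domain).mono
    intro v hv
    exact hext.1 hv
  -- symmetry of the compression
  have hsymC : ∀ x y : C.domain, ⟪C x, ((y:↥Kc):↥Kc)⟫ = ⟪((x:↥Kc):↥Kc), C y⟫ := by
    intro x y
    rw [hCval x, hCval y, Submodule.inner_orthogonalProjectionOnto_eq_of_mem_right,
      Submodule.inner_orthogonalProjectionOnto_eq_of_mem_left]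
    exact hsymSt ⟨((x : ↥Kc) : H), x.2⟩ ⟨((y : ↥Kc) : H), y.2⟩
  have hCleadj : C ≤ C.adjoint :=
    LinearPMap.IsFormalAdjoint.le_adjoint hdC (fun x y => hsymC x y)
  -- characterization of the adjoint of A
  have hdA : Dense (A.domain : Set H) := hdSt
  have hAdag_mem : ∀ y : ↥Kc, (y ∈ A.adjoint.domain ↔ (y:H) ∈ St.domain) := by
    intro y
    constructor
    · intro hy
      have hg : ((y : ↥Kc), A.adjoint ⟨y, hy⟩) ∈ A.adjoint.graph :=
        LinearPMap.mem_graph _ ⟨y, hy⟩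
      have hchar := (myadj_graph_mem_iff A hdA y _).mp hg
      have : (y:H) ∈ St.adjoint.domain := by
        apply St.mem_adjoint_domain_of_exists
        refine ⟨A.adjoint ⟨y, hy⟩, fun x => ?_⟩
        have h2 := hchar x
        rwa [hAval x, Submodule.inner_orthogonalProjectionOnto_eq_of_mem_left] at h2
      rwa [hsa'] at this
    · intro hy
      have hg : ((y:↥Kc), St ⟨(y:H), hy⟩) ∈ A.adjoint.graph := by
        rw [myadj_graph_mem_iff A hdA]
        intro x
        rw [hAval x, Submodule.inner_orthogonalProjectionOnto_eq_of_mem_left]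
        exact hsymSt ⟨(y:H), hy⟩ x
      obtain ⟨z, hz1, -⟩ := (LinearPMap.mem_graph_iff _).mp hg
      have hz1' : (z : ↥Kc) = y := hz1
      exact hz1' ▸ z.2
  have hAdag_val : ∀ (y : A.adjoint.domain),
      A.adjoint y = St ⟨((y : ↥Kc) : H), (hAdag_mem _).mp y.2⟩ := by
    intro y
    apply LinearPMap.adjoint_apply_eq hdA
    intro x
    rw [hAval x, Submodule.inner_orthogonalProjectionOnto_eq_of_mem_left]
    exact hsymSt ⟨((y : ↥Kc) : H), (hAdag_mem _).mp y.2⟩ x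
  have hdomAC : A.adjoint.domain = C.domain := by
    ext v
    rw [hAdag_mem v]
    exact (hmemC v).symm
  have hdAdag : Dense (A.adjoint.domain : Set ↥Kc) := by rw [hdomAC]; exact hdC
  have hAdd : A.adjoint.adjoint = A := myadj_adjoint_adjoint A hdA hdAdag hregext
  -- the adjoint of C is contained in C
  have hkey : ∀ y : C.adjoint.domain, ∃ hy : ((y:↥Kc) ∈ C.domain),
      C ⟨(y:↥Kc), hy⟩ = C.adjoint y := by
    intro y
    have hchar : ∀ x : C.domain, ⟪C.adjoint y, ((x:↥Kc):↥Kc)⟫ = ⟪((y:↥Kc):↥Kc), C x⟫ :=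
      fun x => C.adjoint_isFormalAdjoint hdC y x
    have hg : ((((y:↥Kc)):H), C.adjoint y) ∈ A.adjoint.adjoint.graph := by
      rw [myadj_graph_mem_iff A.adjoint hdAdag]
      intro x
      have hx' : (x : ↥Kc) ∈ C.domain := hdomAC ▸ x.2
      have h1 := hchar ⟨(x:↥Kc), hx'⟩
      rw [hAdag_val x]
      rw [h1]
      rw [hCval ⟨(x:↥Kc), hx'⟩, Submodule.inner_orthogonalProjectionOnto_eq_of_mem_left]
    rw [hAdd] at hg
    obtain ⟨z, hz1, hz2⟩ := (LinearPMap.mem_graph_iff _).mp hg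
    have hz1' : (z : H) = ((y:↥Kc):H) := hz1
    have hz2' : A z = C.adjoint y := hz2
    have hyS : ((y:↥Kc):H) ∈ St.domain := hz1' ▸ z.2
    refine ⟨hyS, ?_⟩
    rw [hCval, ← hz2', hAval z]
    have heq : (⟨((y:↥Kc):H), hyS⟩ : St.domain) = z := Subtype.ext hz1'.symm
    rw [heq]
  have hCadjle : C.adjoint ≤ C := by
    refine ⟨fun v hv => ?_, fun x y hxy => ?_⟩
    · obtain ⟨hy, -⟩ := hkey ⟨v, hv⟩
      exact hy
    · obtain ⟨hy, hval⟩ := hkey x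
      rw [← hval]
      congr 1
      exact Subtype.ext hxy
  have hCeq : C.adjoint = C :=
    LinearPMap.eq_of_le_of_domain_eq hCadjle (le_antisymm hCadjle.1 hCleadj.1)
  -- Part 2 : the compression of S is contained in the compression of St
  have hle2 : compression Kc S ≤ C := by
    refine ⟨fun v hv => hext.1 hv, ?_⟩
    intro x y hxy
    show Kc.orthogonalProjectionOnto (S ⟨((x:↥Kc):H), x.2⟩) =
      Kc.orthogonalProjectionOnto (St ⟨((y:↥Kc):H), y.2⟩)
    congr 1
    exact hext.2 (congrArg (fun t : ↥Kc => (t:H)) hxy)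
  refine ⟨LinearPMap.isSelfAdjoint_def.mpr hCeq, hle2, ?_⟩
  -- Part 3 : the semi-deficiency subspaces
  set S0 : (↥Kc) →ₗ.[ℂ] ↥Kc := compression Kc S with hS0
  have hS0val : ∀ x : S0.domain, S0 x = Kc.orthogonalProjectionOnto (S ⟨((x : ↥Kc) : H), x.2⟩) :=
    fun x => rfl
  set LBI : C.domain →ₗ[ℂ] ↥Kc := C.toFun + Complex.I • C.domain.subtype with hLBI
  set LBmI : C.domain →ₗ[ℂ] ↥Kc := C.toFun + (-Complex.I) • C.domain.subtype with hLBmI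
  have hLBIval : ∀ x : C.domain, LBI x = C x + Complex.I • (x:↥Kc) := fun x => rfl
  have hLBmIval : ∀ x : C.domain, LBmI x = C x + (-Complex.I) • (x:↥Kc) := fun x => rfl
  have hsymC' : ∀ x y : C.domain, ⟪C x, (y:↥Kc)⟫ = ⟪(x:↥Kc), C y⟫ := fun x y => hsymC x y
  have hinj : Function.Injective LBI := by
    intro a b hab
    have h0 : LBI (a - b) = 0 := by rw [map_sub, hab, sub_self]
    have hb := my_im_bound C hsymC' Complex.I (by simp) (a - b)
    rw [← hLBIval, h0] at hb
    simp only [norm_zero, mul_zero] at hb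
    have : ‖((a - b : C.domain) : ↥Kc)‖ = 0 := le_antisymm hb (norm_nonneg _)
    have : ((a - b : C.domain) : ↥Kc) = 0 := norm_eq_zero.mp this
    rw [Submodule.coe_sub, sub_eq_zero] at this
    exact Subtype.ext this
  have hsurjI : Function.Surjective LBI := by
    intro v
    obtain ⟨x, hx⟩ := my_selfAdjoint_surj C hdC hCeq Complex.I (by simp) v
    exact ⟨x, hx⟩
  have hsurjmI : Function.Surjective LBmI := by
    intro v
    obtain ⟨x, hx⟩ := my_selfAdjoint_surj C hdC hCeq (-Complex.I) (by simp) v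
    exact ⟨x, hx⟩
  set e : C.domain ≃ₗ[ℂ] ↥Kc := LinearEquiv.ofBijective LBI ⟨hinj, hsurjI⟩ with he
  set U0 : ↥Kc →ₗ[ℂ] ↥Kc := LBmI.comp (e.symm : ↥Kc →ₗ[ℂ] C.domain) with hU0def
  have hU0 : ∀ x : C.domain, U0 (LBI x) = LBmI x := by
    intro x
    have : e.symm (LBI x) = x := by
      have : LBI x = e x := rfl
      rw [this, e.symm_apply_apply]
    show LBmI (e.symm (LBI x)) = LBmI x
    rw [this]
  have hU0norm : ∀ v, ‖U0 v‖ = ‖v‖ := by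
    intro v
    obtain ⟨x, hx⟩ := hsurjI v
    rw [← hx, hU0]
    exact my_norm_eq C hsymC' x
  have hU0surj : Function.Surjective U0 := by
    intro v
    obtain ⟨x, hx⟩ := hsurjmI v
    exact ⟨LBI x, by rw [hU0]; exact hx⟩
  set U : ↥Kc ≃ₗᵢ[ℂ] ↥Kc := LinearIsometryEquiv.ofSurjective ⟨U0, hU0norm⟩ hU0surj with hU
  have hUapp : ∀ v, U v = U0 v := fun v => rfl
  -- the ranges
  set LS0I : S0.domain →ₗ[ℂ] ↥Kc :=
    S0.toFun - (starRingEnd ℂ Complex.I) • S0.domain.subtype with hLS0I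
  set LS0mI : S0.domain →ₗ[ℂ] ↥Kc :=
    S0.toFun - (starRingEnd ℂ (-Complex.I)) • S0.domain.subtype with hLS0mI
  have hLS0Ival : ∀ x : S0.domain, LS0I x = S0 x + Complex.I • (x:↥Kc) := by
    intro x
    show S0 x - (starRingEnd ℂ Complex.I) • (x:↥Kc) = S0 x + Complex.I • (x:↥Kc)
    rw [Complex.conj_I, neg_smul, sub_neg_eq_add]
  have hLS0mIval : ∀ x : S0.domain, LS0mI x = S0 x + (-Complex.I) • (x:↥Kc) := by
    intro x
    show S0 x - (starRingEnd ℂ (-Complex.I)) • (x:↥Kc) = S0 x + (-Complex.I) • (x:↥Kc)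
    rw [map_neg, Complex.conj_I, neg_neg, neg_smul, ← sub_eq_add_neg]
  have hcompat : ∀ x : S0.domain, ∃ xB : C.domain, ((xB:↥Kc) = (x:↥Kc)) ∧ C xB = S0 x := by
    intro x
    exact ⟨⟨(x:↥Kc), hle2.1 x.2⟩, rfl, (hle2.2 rfl).symm⟩
  have hkeyU : ∀ x : S0.domain, U (LS0I x) = LS0mI x := by
    intro x
    obtain ⟨xB, hco, hval⟩ := hcompat x
    have h1 : LS0I x = LBI xB := by
      rw [hLS0Ival, hLBIval, hval, hco]
    have h2 : LS0mI x = LBmI xB := by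
      rw [hLS0mIval, hLBmIval, hval, hco]
    rw [hUapp, h1, hU0, ← h2]
  have hUM : (LinearMap.range LS0I).map (U.toLinearEquiv : ↥Kc →ₗ[ℂ] ↥Kc) =
      LinearMap.range LS0mI := by
    apply le_antisymm
    · rintro v ⟨u, ⟨x, rfl⟩, rfl⟩
      exact ⟨x, (hkeyU x).symm⟩
    · rintro v ⟨x, rfl⟩
      exact ⟨LS0I x, ⟨x, rfl⟩, hkeyU x⟩
  -- bridge between deficiency subspaces in H and orthogonal complements in Kc
  have hpair : ∀ (lam : ℂ) (x : S0.domain) (v : ↥Kc),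
      (⟪(S0.toFun - (starRingEnd ℂ lam) • S0.domain.subtype) x, v⟫ : ℂ) =
        ⟪(S.toFun - (starRingEnd ℂ lam) • S.domain.subtype) ⟨((x:↥Kc):H), x.2⟩, (v:H)⟫ := by
    intro lam x v
    rw [LinearMap.sub_apply, LinearMap.sub_apply, LinearMap.smul_apply, LinearMap.smul_apply,
      inner_sub_left, inner_sub_left, inner_smul_left, inner_smul_left]
    congr 1
    · show (⟪S0 x, v⟫ : ℂ) = ⟪S ⟨((x:↥Kc):H), x.2⟩, (v:H)⟫
      rw [hS0val]
      exact Submodule.inner_orthogonalProjectionOnto_eq_of_mem_right (K := Kc) v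
        (S.toFun ⟨((x:↥Kc):H), x.2⟩)
  have hbridge : ∀ (lam : ℂ) (v : ↥Kc),
      v ∈ (LinearMap.range (S0.toFun - (starRingEnd ℂ lam) • S0.domain.subtype))ᗮ ↔
        (v:H) ∈ defSubspace S lam := by
    intro lam v
    rw [Submodule.mem_orthogonal, Submodule.mem_orthogonal]
    constructor
    · rintro h u ⟨x, rfl⟩
      have hx' : (⟨(x:H), S.domain.le_topologicalClosure x.2⟩ : ↥Kc) ∈ S0.domain := x.2
      exact (hpair lam ⟨⟨(x:H), S.domain.le_topologicalClosure x.2⟩, hx'⟩ v).symm.trans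
        (h _ ⟨⟨⟨(x:H), S.domain.le_topologicalClosure x.2⟩, hx'⟩, rfl⟩)
    · rintro h u ⟨x, rfl⟩
      exact (hpair lam x v).trans (h _ ⟨⟨((x:↥Kc):H), x.2⟩, rfl⟩)
  have horthI : ∀ v : ↥Kc, v ∈ (LinearMap.range LS0I)ᗮ ↔
      U v ∈ (LinearMap.range LS0mI)ᗮ := by
    intro v
    rw [my_map_orthogonal U (LinearMap.range LS0I) v, hUM]
  refine ⟨((myCompIso (defSubspace S Complex.I) Kc (LinearMap.range LS0I)ᗮ
      (fun v => hbridge Complex.I v)).trans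
    (mySubIso U (LinearMap.range LS0I)ᗮ (LinearMap.range LS0mI)ᗮ horthI)).trans
    (myCompIso (defSubspace S (-Complex.I)) Kc (LinearMap.range LS0mI)ᗮ
      (fun v => hbridge (-Complex.I) v)).symm⟩
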